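/- For each 1 ≤ k ≤ m, the map ψ_k : 𝒩_{k−1} → 𝒩_k is surjective: for every (N, A) ∈ 𝒩_k there exists (N′, A′) ∈ 𝒩_{k−1} with ψ_k(N′, A′) = (N, A). -/

import Mathlib

open Finset

/-- The support of a signed subset `X = (X⁺, X⁻)`. -/
def supp {α : Type} [DecidableEq α] (X : Finset α × Finset α) : Finset α := X.1 ∪ X.2

/-- An oriented matroid on ground set `α`, given by its collection of signed circuits,
satisfying the signed circuit axioms (C1)-(C4). -/
structure OM (α : Type) [DecidableEq α] where
  C : Set (Finset α × Finset α)
  disj : ∀ X ∈ C, Disjoint X.1 X.2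
  not_empty_mem : ((∅ : Finset α), (∅ : Finset α)) ∉ C
  neg_mem : ∀ X ∈ C, (X.2, X.1) ∈ C
  incomp : ∀ X ∈ C, ∀ Y ∈ C, supp X ⊆ supp Y → X = Y ∨ X = (Y.2, Y.1)
  elimAx : ∀ X ∈ C, ∀ Y ∈ C, X ≠ Y → X ≠ (Y.2, Y.1) → ∀ e ∈ X.1 ∩ Y.2,
    ∃ Z ∈ C, Z.1 ⊆ (X.1 ∪ Y.1).erase e ∧ Z.2 ⊆ (X.2 ∪ Y.2).erase e

/-- A collection of signed subsets is acyclic if it contains no positive member. -/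
def Acyclic {α : Type} (C : Set (Finset α × Finset α)) : Prop :=
  ∀ X ∈ C, X.2 ≠ ∅

/-- Reorientation of a signed subset by `A`. -/
def reorient {α : Type} [DecidableEq α] (A : Finset α) (X : Finset α × Finset α) :
    Finset α × Finset α :=
  ((X.1 \ A) ∪ (X.2 ∩ A), (X.2 \ A) ∪ (X.1 ∩ A))

/-- Reorientation of a collection of signed subsets by `A`. -/
def reorientC {α : Type} [DecidableEq α] (A : Finset α)
    (C : Set (Finset α × Finset α)) : Set (Finset α × Finset α) :=
  reorient A '' C

/-- Deletion: keep the members whose support avoids `D`. -/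
def delC {α : Type} [DecidableEq α] (D : Finset α)
    (C : Set (Finset α × Finset α)) : Set (Finset α × Finset α) :=
  {X ∈ C | Disjoint (supp X) D}

/-- The pre-circuits of the contraction by `T`. -/
def contrPre {α : Type} [DecidableEq α] (T : Finset α)
    (C : Set (Finset α × Finset α)) : Set (Finset α × Finset α) :=
  {Z | ∃ Y ∈ C, supp Y \ T ≠ ∅ ∧ Z = (Y.1 \ T, Y.2 \ T)}

/-- Contraction: the support-inclusion-minimal members of `contrPre T C`. -/
def contrC {α : Type} [DecidableEq α] (T : Finset α)
    (C : Set (Finset α × Finset α)) : Set (Finset α × Finset α) :=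
  {Z ∈ contrPre T C | ∀ W ∈ contrPre T C, supp W ⊆ supp Z → supp W = supp Z}

/-- `N` is an NBC subset of the underlying matroid of `M`: it contains no
broken circuit, i.e. no circuit of the underlying matroid with its maximal
element deleted. -/
def IsNBC {α : Type} [DecidableEq α] [LinearOrder α] (M : OM α) (N : Finset α) : Prop :=
  ∀ X ∈ M.C, ∀ h : (supp X).Nonempty, ¬ (supp X).erase ((supp X).max' h) ⊆ N

/-- `E_k = {e₁, …, e_k}`: the first `k` elements of the ground set `Fin m`. -/
def Ek (m k : ℕ) : Finset (Fin m) := Finset.filter (fun i => (i : ℕ) < k) Finset.univ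

/-- `M` is loopless: no signed circuit has support of size one. -/
def Loopless {m : ℕ} (M : OM (Fin m)) : Prop := ∀ X ∈ M.C, (supp X).card ≠ 1

/-- `M(N, A) = ₋ₐ(M ∖ (E_k − N) / N)`. -/
def MNA {m : ℕ} (M : OM (Fin m)) (k : ℕ) (N A : Finset (Fin m)) :
    Set (Finset (Fin m) × Finset (Fin m)) :=
  reorientC A (contrC N (delC (Ek m k \ N) M.C))

/-- The set `𝒩_k` of pairs `(N, A)` with `N ⊆ E_k` an NBC subset of the underlying
matroid, `A ⊆ E − E_k`, and `M(N, A)` acyclic. -/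
def NFam {m : ℕ} (M : OM (Fin m)) (k : ℕ) : Set (Finset (Fin m) × Finset (Fin m)) :=
  {p | p.1 ⊆ Ek m k ∧ IsNBC M p.1 ∧ p.2 ⊆ (Ek m k)ᶜ ∧ Acyclic (MNA M k p.1 p.2)}

open scoped Classical in
/-- The map `ψ_k` (where `j = k - 1` and `e = e_k`), defined on `𝒩_{k-1}`:
`ψ_k(N, A) = (N ∪ {e_k}, A)` if `e_k ∉ A` and `₋{e_k}M(N, A)` is acyclic,
`ψ_k(N, A) = (N, A)` if `e_k ∉ A` and `₋{e_k}M(N, A)` is not acyclic, and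
`ψ_k(N, A) = (N, A − {e_k})` if `e_k ∈ A`. -/
noncomputable def psi {m : ℕ} (M : OM (Fin m)) (j : ℕ) (e : Fin m)
    (p : Finset (Fin m) × Finset (Fin m)) : Finset (Fin m) × Finset (Fin m) :=
  if e ∈ p.2 then (p.1, p.2.erase e)
  else if Acyclic (reorientC {e} (MNA M j p.1 p.2)) then (insert e p.1, p.2)
  else p

section AuxBasic
variable {α : Type} [DecidableEq α]

lemma supp_reorient (A : Finset α) (X : Finset α × Finset α) :
    supp (reorient A X) = supp X := by
  ext x; simp only [supp, reorient, Finset.mem_union, Finset.mem_sdiff, Finset.mem_inter]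
  tauto

lemma reorient_reorient (A : Finset α) (X : Finset α × Finset α) :
    reorient A (reorient A X) = X := by
  refine Prod.ext ?_ ?_ <;>
  · ext x
    simp only [reorient, Finset.mem_union, Finset.mem_sdiff, Finset.mem_inter]
    tauto

lemma reorient_sdiff (A T : Finset α) (X : Finset α × Finset α) :
    reorient A (X.1 \ T, X.2 \ T) = ((reorient A X).1 \ T, (reorient A X).2 \ T) := by
  refine Prod.ext ?_ ?_ <;>
  · ext x
    simp only [reorient, Finset.mem_union, Finset.mem_sdiff, Finset.mem_inter]
    tauto

lemma supp_pair_sdiff (T : Finset α) (X : Finset α × Finset α) :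
    supp (X.1 \ T, X.2 \ T) = supp X \ T := by
  ext x; simp only [supp, Finset.mem_union, Finset.mem_sdiff]; tauto

lemma supp_eq_empty {X : Finset α × Finset α} (h : supp X = ∅) : X = (∅, ∅) := by
  rw [supp, Finset.union_eq_empty] at h
  exact Prod.ext h.1 h.2

lemma reorient_insert {e : α} {A : Finset α} (he : e ∉ A) (X : Finset α × Finset α) :
    reorient {e} (reorient A X) = reorient (insert e A) X := by
  refine Prod.ext ?_ ?_ <;>
  · ext x
    simp only [reorient, Finset.mem_union, Finset.mem_sdiff, Finset.mem_inter,
      Finset.mem_singleton, Finset.mem_insert]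
    by_cases hx : x = e
    · subst hx; tauto
    · tauto

end AuxBasic
section ReorOM
variable {α : Type} [DecidableEq α]

lemma reorient_swap (A : Finset α) (X : Finset α × Finset α) :
    reorient A (X.2, X.1) = ((reorient A X).2, (reorient A X).1) := rfl

lemma aux_sub {f : α} {A Z1 Z2 U1 U2 : Finset α} (h1 : Z1 ⊆ U1.erase f)
    (h2 : Z2 ⊆ U2.erase f) : Z1 \ A ∪ Z2 ∩ A ⊆ (U1 \ A ∪ U2 ∩ A).erase f := by
  intro x hx
  simp only [Finset.mem_union, Finset.mem_sdiff, Finset.mem_inter, Finset.mem_erase] at hx ⊢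
  rcases hx with ⟨hx1, hx2⟩ | ⟨hx1, hx2⟩
  · have h := h1 hx1; rw [Finset.mem_erase] at h; tauto
  · have h := h2 hx1; rw [Finset.mem_erase] at h; tauto

lemma union_reorient_fst (A : Finset α) (X Y : Finset α × Finset α) :
    (reorient A X).1 ∪ (reorient A Y).1 = (X.1 ∪ Y.1) \ A ∪ (X.2 ∪ Y.2) ∩ A := by
  ext x
  simp only [reorient, Finset.mem_union, Finset.mem_sdiff, Finset.mem_inter]
  tauto

lemma union_reorient_snd (A : Finset α) (X Y : Finset α × Finset α) :
    (reorient A X).2 ∪ (reorient A Y).2 = (X.2 ∪ Y.2) \ A ∪ (X.1 ∪ Y.1) ∩ A := by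
  ext x
  simp only [reorient, Finset.mem_union, Finset.mem_sdiff, Finset.mem_inter]
  tauto

/-- Reorientation of an oriented matroid is an oriented matroid. -/
def OM.reor (M : OM α) (A : Finset α) : OM α where
  C := reorientC A M.C
  disj := by
    rintro X ⟨Y, hY, rfl⟩
    have h := M.disj Y hY
    rw [Finset.disjoint_left] at h ⊢
    intro x hx hx'
    simp only [reorient, Finset.mem_union, Finset.mem_sdiff, Finset.mem_inter] at hx hx'
    tauto
  not_empty_mem := by
    rintro ⟨Y, hY, hEq⟩
    have : Y = (∅, ∅) := by
      have h2 := congrArg (reorient A) hEq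
      rw [reorient_reorient] at h2
      rw [h2]
      refine Prod.ext ?_ ?_ <;> simp [reorient]
    exact M.not_empty_mem (this ▸ hY)
  neg_mem := by
    rintro X ⟨Y, hY, rfl⟩
    exact ⟨(Y.2, Y.1), M.neg_mem Y hY, (reorient_swap A Y).symm ▸ rfl⟩
  incomp := by
    rintro X ⟨X', hX', rfl⟩ Y ⟨Y', hY', rfl⟩ hsub
    rw [supp_reorient, supp_reorient] at hsub
    rcases M.incomp X' hX' Y' hY' hsub with h | h
    · exact Or.inl (by rw [h])
    · exact Or.inr (by rw [h, reorient_swap])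
  elimAx := by
    rintro X ⟨X', hX', rfl⟩ Y ⟨Y', hY', rfl⟩ hne hne2 f hf
    rw [Finset.mem_inter] at hf
    obtain ⟨hf1, hf2⟩ := hf
    simp only [reorient, Finset.mem_union, Finset.mem_sdiff, Finset.mem_inter] at hf1 hf2
    have key : ∃ Z ∈ M.C, Z.1 ⊆ (X'.1 ∪ Y'.1).erase f ∧ Z.2 ⊆ (X'.2 ∪ Y'.2).erase f := by
      by_cases hfA : f ∈ A
      · have hfX : f ∈ X'.2 := by tauto
        have hfY : f ∈ Y'.1 := by tauto
        have hne'' : Y' ≠ X' := fun h => hne (by rw [h])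
        have hne2'' : Y' ≠ (X'.2, X'.1) := by
          intro h
          apply hne2
          rw [show X' = (Y'.2, Y'.1) from by
            refine Prod.ext ?_ ?_
            · have := congrArg Prod.snd h; simpa using this.symm
            · have := congrArg Prod.fst h; simpa using this.symm]
          rw [reorient_swap]
        obtain ⟨Z, hZ, hZ1, hZ2⟩ :=
          M.elimAx Y' hY' X' hX' hne'' hne2'' f (Finset.mem_inter.mpr ⟨hfY, hfX⟩)
        exact ⟨Z, hZ, by rwa [Finset.union_comm], by rwa [Finset.union_comm]⟩
      · have hfX : f ∈ X'.1 := by tauto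
        have hfY : f ∈ Y'.2 := by tauto
        have hne'' : X' ≠ Y' := fun h => hne (by rw [h])
        have hne2'' : X' ≠ (Y'.2, Y'.1) := fun h => hne2 (by rw [h, reorient_swap])
        exact M.elimAx X' hX' Y' hY' hne'' hne2'' f (Finset.mem_inter.mpr ⟨hfX, hfY⟩)
    obtain ⟨Z, hZ, hZ1, hZ2⟩ := key
    refine ⟨reorient A Z, ⟨Z, hZ, rfl⟩, ?_, ?_⟩
    · rw [union_reorient_fst]
      exact aux_sub hZ1 hZ2
    · rw [union_reorient_snd]
      exact aux_sub hZ2 hZ1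

end ReorOM
section Commute
variable {α : Type} [DecidableEq α]

lemma delC_reorientC (D A : Finset α) (C : Set (Finset α × Finset α)) :
    delC D (reorientC A C) = reorientC A (delC D C) := by
  ext X
  constructor
  · rintro ⟨⟨Y, hY, rfl⟩, hdisj⟩
    exact ⟨Y, ⟨hY, by rwa [supp_reorient] at hdisj⟩, rfl⟩
  · rintro ⟨Y, ⟨hY, hd⟩, rfl⟩
    exact ⟨⟨Y, hY, rfl⟩, by rwa [supp_reorient]⟩

lemma contrPre_reorientC (T A : Finset α) (C : Set (Finset α × Finset α)) :
    contrPre T (reorientC A C) = reorientC A (contrPre T C) := by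
  ext Z
  constructor
  · rintro ⟨Y, ⟨Y0, hY0, rfl⟩, hne, rfl⟩
    rw [supp_reorient] at hne
    exact ⟨(Y0.1 \ T, Y0.2 \ T), ⟨Y0, hY0, hne, rfl⟩, reorient_sdiff A T Y0⟩
  · rintro ⟨Z0, ⟨Y, hY, hne, rfl⟩, rfl⟩
    refine ⟨reorient A Y, ⟨Y, hY, rfl⟩, by rwa [supp_reorient], reorient_sdiff A T Y⟩

lemma contrC_reorientC (T A : Finset α) (C : Set (Finset α × Finset α)) :
    contrC T (reorientC A C) = reorientC A (contrC T C) := by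
  ext Z
  constructor
  · rintro ⟨hpre, hmin⟩
    rw [contrPre_reorientC] at hpre
    obtain ⟨Z0, hZ0, rfl⟩ := hpre
    refine ⟨Z0, ⟨hZ0, ?_⟩, rfl⟩
    intro W hW hsub
    have hW' : reorient A W ∈ contrPre T (reorientC A C) := by
      rw [contrPre_reorientC]; exact ⟨W, hW, rfl⟩
    have := hmin (reorient A W) hW' (by rwa [supp_reorient, supp_reorient])
    rwa [supp_reorient, supp_reorient] at this
  · rintro ⟨Z0, ⟨hZ0, hmin⟩, rfl⟩
    refine ⟨by rw [contrPre_reorientC]; exact ⟨Z0, hZ0, rfl⟩, ?_⟩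
    intro W hW hsub
    rw [contrPre_reorientC] at hW
    obtain ⟨W0, hW0, rfl⟩ := hW
    rw [supp_reorient, supp_reorient] at hsub ⊢
    exact hmin W0 hW0 hsub

lemma MNA_eq {m : ℕ} (M : OM (Fin m)) (j : ℕ) (N A : Finset (Fin m)) :
    MNA M j N A = contrC N (delC (Ek m j \ N) ((M.reor A).C)) := by
  show _ = contrC N (delC (Ek m j \ N) (reorientC A M.C))
  rw [delC_reorientC, contrC_reorientC]
  rfl

lemma reorientC_insert {e : α} {A : Finset α} (he : e ∉ A)
    (C : Set (Finset α × Finset α)) :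
    reorientC (insert e A) C = reorientC {e} (reorientC A C) := by
  ext Z
  constructor
  · rintro ⟨Y, hY, rfl⟩
    exact ⟨reorient A Y, ⟨Y, hY, rfl⟩, reorient_insert he Y⟩
  · rintro ⟨W, ⟨Y, hY, rfl⟩, rfl⟩
    exact ⟨Y, hY, (reorient_insert he Y).symm⟩

end Commute
section Core
variable {α : Type} [DecidableEq α]

/-- Key lemma: if no circuit avoiding `D` has support inside `T`, and some circuit
avoiding `D` has negative part inside `T`, then the contraction by `T` of the
deletion of `D` has a positive member. -/
lemma core (M : OM α) (D T : Finset α)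
    (H1 : ∀ Y ∈ M.C, Disjoint (supp Y) D → ¬ supp Y ⊆ T)
    (Y₀ : Finset α × Finset α) (hY₀ : Y₀ ∈ M.C) (hD₀ : Disjoint (supp Y₀) D)
    (hp₀ : Y₀.2 ⊆ T) :
    ∃ Z ∈ contrC T (delC D M.C), Z.2 = ∅ := by
  classical
  have hex : ∃ n : ℕ, ∃ V, (V ∈ M.C ∧ Disjoint (supp V) D ∧ V.2 ⊆ T) ∧
      (supp V \ T).card = n := ⟨_, Y₀, ⟨hY₀, hD₀, hp₀⟩, rfl⟩
  obtain ⟨V, hV, hVcard⟩ := Nat.find_spec hex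
  obtain ⟨hVC, hVD, hVT⟩ := hV
  refine ⟨(V.1 \ T, V.2 \ T), ⟨⟨V, ⟨hVC, hVD⟩, ?_, rfl⟩, ?_⟩, ?_⟩
  · rw [Ne, Finset.sdiff_eq_empty_iff_subset]
    exact H1 V hVC hVD
  · -- minimality
    intro W' hW' hsub
    by_contra hneq
    obtain ⟨W₀, ⟨hW₀C, hW₀D⟩, hW₀ne, rfl⟩ := hW'
    simp only [supp_pair_sdiff] at hsub hneq
    have hex2 : ∃ n : ℕ, ∃ W, (W ∈ M.C ∧ Disjoint (supp W) D ∧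
        supp W \ T ⊆ supp V \ T ∧ supp W \ T ≠ supp V \ T) ∧ (W.2 \ T).card = n :=
      ⟨_, W₀, ⟨hW₀C, hW₀D, hsub, hneq⟩, rfl⟩
    obtain ⟨W, ⟨hWC, hWD, hWsub, hWne⟩, hWcard⟩ := Nat.find_spec hex2
    by_cases hW2 : W.2 ⊆ T
    · have hlt : (supp W \ T).card < (supp V \ T).card :=
        Finset.card_lt_card (hWsub.ssubset_of_ne hWne)
      have hge := Nat.find_min' hex ⟨W, ⟨hWC, hWD, hW2⟩, rfl⟩
      omega
    · have hfne : (W.2 \ T).Nonempty := by rwa [Finset.sdiff_nonempty]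
      obtain ⟨f, hf⟩ := hfne
      rw [Finset.mem_sdiff] at hf
      obtain ⟨hfW2, hfT⟩ := hf
      have hfsuppV : f ∈ supp V := by
        have h1 : f ∈ supp W \ T :=
          Finset.mem_sdiff.mpr ⟨Finset.mem_union_right _ hfW2, hfT⟩
        exact (Finset.mem_sdiff.mp (hWsub h1)).1
      have hfV1 : f ∈ V.1 := by
        rcases Finset.mem_union.mp hfsuppV with h | h
        · exact h
        · exact absurd (hVT h) hfT
      have hVW : V ≠ W := fun h => hWne (by rw [h])
      have hVW2 : V ≠ (W.2, W.1) := by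
        intro h
        apply hWne
        have hss : supp V = supp W := by
          rw [h]; show W.2 ∪ W.1 = supp W; rw [Finset.union_comm]; rfl
        rw [hss]
      obtain ⟨X, hXC, hX1, hX2⟩ := M.elimAx V hVC W hWC hVW hVW2 f
        (Finset.mem_inter.mpr ⟨hfV1, hfW2⟩)
      have hXsupp : supp X ⊆ (supp V ∪ supp W).erase f := by
        intro x hx
        rw [Finset.mem_erase, Finset.mem_union]
        rcases Finset.mem_union.mp hx with h | h
        · have h' := hX1 h
          rw [Finset.mem_erase, Finset.mem_union] at h'
          refine ⟨h'.1, ?_⟩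
          rcases h'.2 with h'' | h''
          · exact Or.inl (Finset.mem_union_left _ h'')
          · exact Or.inr (Finset.mem_union_left _ h'')
        · have h' := hX2 h
          rw [Finset.mem_erase, Finset.mem_union] at h'
          refine ⟨h'.1, ?_⟩
          rcases h'.2 with h'' | h''
          · exact Or.inl (Finset.mem_union_right _ h'')
          · exact Or.inr (Finset.mem_union_right _ h'')
      have hXD : Disjoint (supp X) D :=
        Disjoint.mono_left (hXsupp.trans (Finset.erase_subset _ _))
          (Finset.disjoint_union_left.mpr ⟨hVD, hWD⟩)
      have hfX : f ∉ supp X := by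
        intro h
        have h' := hXsupp h
        rw [Finset.mem_erase] at h'
        exact h'.1 rfl
      have hXVsub : supp X \ T ⊆ supp V \ T := by
        intro x hx
        rw [Finset.mem_sdiff] at hx ⊢
        have h' := hXsupp hx.1
        rw [Finset.mem_erase, Finset.mem_union] at h'
        rcases h'.2 with h'' | h''
        · exact ⟨h'', hx.2⟩
        · exact Finset.mem_sdiff.mp (hWsub (Finset.mem_sdiff.mpr ⟨h'', hx.2⟩))
      have hXVne : supp X \ T ≠ supp V \ T := by
        intro h
        apply hfX
        have h2 : f ∈ supp X \ T := by rw [h]; exact Finset.mem_sdiff.mpr ⟨hfsuppV, hfT⟩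
        exact (Finset.mem_sdiff.mp h2).1
      have hX2sub : X.2 \ T ⊆ (W.2 \ T).erase f := by
        intro x hx
        rw [Finset.mem_sdiff] at hx
        have h' := hX2 hx.1
        rw [Finset.mem_erase, Finset.mem_union] at h'
        rw [Finset.mem_erase, Finset.mem_sdiff]
        rcases h'.2 with h'' | h''
        · exact absurd (hVT h'') hx.2
        · exact ⟨h'.1, h'', hx.2⟩
      have hcard : (X.2 \ T).card < (W.2 \ T).card :=
        lt_of_le_of_lt (Finset.card_le_card hX2sub)
          (Finset.card_erase_lt_of_mem (Finset.mem_sdiff.mpr ⟨hfW2, hfT⟩))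
      have hge := Nat.find_min' hex2 ⟨X, ⟨hXC, hXD, hXVsub, hXVne⟩, rfl⟩
      omega
  · show V.2 \ T = ∅
    rw [Finset.sdiff_eq_empty_iff_subset]
    exact hVT

/-- A member of a contraction of a deletion avoiding `e` also survives deleting `e`. -/
lemma contrC_del_insert (C : Set (Finset α × Finset α)) (T D : Finset α) (e : α)
    (heT : e ∉ T) {Z} (hZ : Z ∈ contrC T (delC D C)) (he : e ∉ supp Z) :
    Z ∈ contrC T (delC (insert e D) C) := by
  obtain ⟨⟨Y, ⟨hYC, hYD⟩, hne, rfl⟩, hmin⟩ := hZ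
  rw [supp_pair_sdiff] at he
  have heY : e ∉ supp Y := fun h => he (Finset.mem_sdiff.mpr ⟨h, heT⟩)
  refine ⟨⟨Y, ⟨hYC, ?_⟩, hne, rfl⟩, ?_⟩
  · rw [Finset.disjoint_insert_right]
    exact ⟨heY, hYD⟩
  · intro W hW hsub
    refine hmin W ?_ hsub
    obtain ⟨Y', ⟨hY'C, hY'D⟩, h1, h2⟩ := hW
    exact ⟨Y', ⟨hY'C, hY'D.mono_right (Finset.subset_insert e D)⟩, h1, h2⟩

end Core

section NBC

lemma isNBC_anti {α : Type} [DecidableEq α] [LinearOrder α] (M : OM α) {N N' : Finset α}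
    (h : N' ⊆ N) (hN : IsNBC M N) : IsNBC M N' :=
  fun X hX hne hsub => hN X hX hne (hsub.trans h)

lemma nbc_insert {m k : ℕ} (hk1 : 1 ≤ k) (hkm : k ≤ m) (M : OM (Fin m))
    {N : Finset (Fin m)} (hNBC : IsNBC M N) (hN : N ⊆ Ek m (k-1)) :
    ∀ Y ∈ M.C, ¬ supp Y ⊆ insert (⟨k-1, Nat.lt_of_lt_of_le (Nat.sub_lt hk1 Nat.one_pos) hkm⟩ : Fin m) N := by
  intro Y hY hsub
  have hne : (supp Y).Nonempty := by
    rw [Finset.nonempty_iff_ne_empty]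
    intro h
    exact M.not_empty_mem (supp_eq_empty h ▸ hY)
  refine hNBC Y hY hne ?_
  intro x hx
  rw [Finset.mem_erase] at hx
  have hx' := hsub hx.2
  rw [Finset.mem_insert] at hx'
  rcases hx' with h | h
  · exfalso
    set t := (supp Y).max' hne with ht
    have htmem : t ∈ supp Y := Finset.max'_mem _ hne
    have hle : x ≤ t := Finset.le_max' _ x hx.2
    have ht' := hsub htmem
    rw [Finset.mem_insert] at ht'
    rcases ht' with h' | h'
    · exact hx.1 (h.trans h'.symm)
    · have htk := hN h'
      simp only [Ek, Finset.mem_filter, Finset.mem_univ, true_and] at htk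
      rw [h] at hle
      rw [Fin.le_def] at hle
      simp only [] at hle
      omega
  · exact h

end NBC
section EkLemmas

lemma Ek_subset {m j k : ℕ} (h : j ≤ k) : Ek m j ⊆ Ek m k := by
  intro x hx
  simp only [Ek, Finset.mem_filter, Finset.mem_univ, true_and] at hx ⊢
  omega

lemma Ek_insert {m k : ℕ} (hk1 : 1 ≤ k) (hkm : k ≤ m) :
    Ek m k = insert (⟨k-1, Nat.lt_of_lt_of_le (Nat.sub_lt hk1 Nat.one_pos) hkm⟩ : Fin m) (Ek m (k-1)) := by
  ext x
  simp only [Ek, Finset.mem_filter, Finset.mem_univ, true_and, Finset.mem_insert,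
    Fin.ext_iff]
  omega

lemma mem_Ek_self {m k : ℕ} (hk1 : 1 ≤ k) (hkm : k ≤ m) :
    (⟨k-1, Nat.lt_of_lt_of_le (Nat.sub_lt hk1 Nat.one_pos) hkm⟩ : Fin m) ∈ Ek m k := by
  simp only [Ek, Finset.mem_filter, Finset.mem_univ, true_and]
  omega

lemma not_mem_Ek_pred {m k : ℕ} (hk1 : 1 ≤ k) (hkm : k ≤ m) :
    (⟨k-1, Nat.lt_of_lt_of_le (Nat.sub_lt hk1 Nat.one_pos) hkm⟩ : Fin m) ∉ Ek m (k-1) := by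
  simp only [Ek, Finset.mem_filter, Finset.mem_univ, true_and]
  omega

lemma subset_Ek_pred {m k : ℕ} (hk1 : 1 ≤ k) (hkm : k ≤ m) {N : Finset (Fin m)}
    (hN : N ⊆ Ek m k) (heN : (⟨k-1, Nat.lt_of_lt_of_le (Nat.sub_lt hk1 Nat.one_pos) hkm⟩ : Fin m) ∉ N) : N ⊆ Ek m (k-1) := by
  intro x hx
  have h1 := hN hx
  simp only [Ek, Finset.mem_filter, Finset.mem_univ, true_and] at h1 ⊢
  have hxe : (x : ℕ) ≠ k - 1 := by
    intro h
    have hxe' : x = (⟨k-1, Nat.lt_of_lt_of_le (Nat.sub_lt hk1 Nat.one_pos) hkm⟩ : Fin m) := Fin.ext h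
    exact heN (hxe' ▸ hx)
  omega

lemma erase_subset_Ek_pred {m k : ℕ} (hk1 : 1 ≤ k) (hkm : k ≤ m) {N : Finset (Fin m)}
    (hN : N ⊆ Ek m k) : N.erase ⟨k-1, Nat.lt_of_lt_of_le (Nat.sub_lt hk1 Nat.one_pos) hkm⟩ ⊆ Ek m (k-1) := by
  intro x hx
  rw [Finset.mem_erase] at hx
  have h1 := hN hx.2
  simp only [Ek, Finset.mem_filter, Finset.mem_univ, true_and] at h1 ⊢
  have hxe : (x : ℕ) ≠ k - 1 := by
    intro h
    exact hx.1 (Fin.ext h)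
  omega

lemma sdiff_erase_eq {m k : ℕ} (hk1 : 1 ≤ k) (hkm : k ≤ m) {N : Finset (Fin m)}
    (heN : (⟨k-1, Nat.lt_of_lt_of_le (Nat.sub_lt hk1 Nat.one_pos) hkm⟩ : Fin m) ∈ N) :
    Ek m (k-1) \ (N.erase ⟨k-1, Nat.lt_of_lt_of_le (Nat.sub_lt hk1 Nat.one_pos) hkm⟩) = Ek m k \ N := by
  ext x
  simp only [Finset.mem_sdiff, Finset.mem_erase, Ek, Finset.mem_filter, Finset.mem_univ,
    true_and, not_and]
  constructor
  · rintro ⟨h1, h2⟩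
    refine ⟨by omega, ?_⟩
    apply h2
    intro h
    rw [h] at h1
    simp only [] at h1
    omega
  · rintro ⟨h1, h2⟩
    have hxe : (x : ℕ) ≠ k - 1 := by
      intro h
      exact h2 ((Fin.ext h : x = (⟨k-1, Nat.lt_of_lt_of_le (Nat.sub_lt hk1 Nat.one_pos) hkm⟩ : Fin m)) ▸ heN)
    exact ⟨by omega, fun _ => h2⟩

lemma sdiff_insert_eq {m k : ℕ} (hk1 : 1 ≤ k) (hkm : k ≤ m) {N : Finset (Fin m)}
    (heN : (⟨k-1, Nat.lt_of_lt_of_le (Nat.sub_lt hk1 Nat.one_pos) hkm⟩ : Fin m) ∉ N) :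
    Ek m k \ N = insert (⟨k-1, Nat.lt_of_lt_of_le (Nat.sub_lt hk1 Nat.one_pos) hkm⟩ : Fin m) (Ek m (k-1) \ N) := by
  rw [Ek_insert hk1 hkm, Finset.insert_sdiff_of_notMem _ heN]

end EkLemmas
/-- **Surjectivity of `ψ_k`**: every `(N, A) ∈ 𝒩_k` is the image under `ψ_k` of some
`(N′, A′) ∈ 𝒩_{k−1}`. -/
theorem stmt_5 (m : ℕ) (M : OM (Fin m)) (hM : Loopless M)
    (k : ℕ) (hk1 : 1 ≤ k) (hkm : k ≤ m) :
    ∀ q ∈ NFam M k, ∃ p ∈ NFam M (k - 1), psi M (k - 1) ⟨k - 1, by omega⟩ p = q := by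
  have hem : k - 1 < m := by omega
  rintro ⟨N, A⟩ ⟨hN, hNBC, hA, hAc⟩
  set e : Fin m := ⟨k - 1, hem⟩ with he_def
  have heEk : e ∈ Ek m k := mem_Ek_self hk1 hkm
  have heA : e ∉ A := by
    intro h
    have h2 := hA h
    rw [Finset.mem_compl] at h2
    exact h2 heEk
  have hA' : A ⊆ (Ek m (k-1))ᶜ := by
    intro x hx
    rw [Finset.mem_compl]
    intro hmem
    have h2 := hA hx
    rw [Finset.mem_compl] at h2
    exact h2 (Ek_subset (by omega) hmem)
  by_cases heN : e ∈ N
  · -- Case 1 : e ∈ N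
    set N' : Finset (Fin m) := N.erase e with hN'def
    have hNsub' : N' ⊆ Ek m (k-1) := erase_subset_Ek_pred hk1 hkm hN
    have hNBC' : IsNBC M N' := isNBC_anti M (Finset.erase_subset e N) hNBC
    have hDeq : Ek m (k-1) \ N' = Ek m k \ N := sdiff_erase_eq hk1 hkm heN
    have hinsN : insert e N' = N := Finset.insert_erase heN
    have H1 : ∀ Y ∈ (M.reor A).C, ¬ supp Y ⊆ N := by
      rintro Y ⟨Y₀, hY₀, rfl⟩
      rw [supp_reorient, ← hinsN]
      exact nbc_insert hk1 hkm M hNBC' hNsub' Y₀ hY₀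
    have Hkey : ∀ Z ∈ contrC N' (delC (Ek m (k-1) \ N') ((M.reor A).C)), ¬ Z.2 ⊆ {e} := by
      intro Z hZ hcon
      obtain ⟨⟨Y₀, ⟨hY₀C, hY₀D⟩, hne₀, rfl⟩, -⟩ := hZ
      have hY₀2 : Y₀.2 ⊆ N := by
        intro x hx
        by_cases hxN' : x ∈ N'
        · exact (Finset.erase_subset e N) hxN'
        · have h1 : x ∈ Y₀.2 \ N' := Finset.mem_sdiff.mpr ⟨hx, hxN'⟩
          have h2 := hcon h1
          rw [Finset.mem_singleton] at h2
          rw [h2]; exact heN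
      obtain ⟨Z', hZ', hZ'2⟩ := core (M.reor A) (Ek m (k-1) \ N') N
        (fun Y hY _ => H1 Y hY) Y₀ hY₀C hY₀D hY₀2
      rw [hDeq] at hZ'
      have hAc' := hAc
      rw [MNA_eq] at hAc'
      exact hAc' Z' hZ' hZ'2
    have hAcy1 : Acyclic (MNA M (k-1) N' A) := by
      rw [MNA_eq]
      intro Z hZ hZ2
      exact Hkey Z hZ (by rw [hZ2]; exact Finset.empty_subset _)
    have hre : Acyclic (reorientC {e} (MNA M (k-1) N' A)) := by
      rintro X ⟨Z, hZ, rfl⟩ hX2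
      rw [MNA_eq] at hZ
      apply Hkey Z hZ
      simp only [reorient] at hX2
      have h2 := Finset.union_eq_empty.mp hX2
      exact Finset.sdiff_eq_empty_iff_subset.mp h2.1
    refine ⟨(N', A), ⟨hNsub', hNBC', hA', hAcy1⟩, ?_⟩
    show psi M (k-1) e (N', A) = (N, A)
    simp only [psi]
    rw [if_neg heA, if_pos hre, hinsN]
  · -- Case 2 : e ∉ N
    have hNsub : N ⊆ Ek m (k-1) := subset_Ek_pred hk1 hkm hN heN
    have hDeq2 : Ek m k \ N = insert e (Ek m (k-1) \ N) := sdiff_insert_eq hk1 hkm heN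
    have H1N : ∀ Y ∈ (M.reor A).C, ¬ supp Y ⊆ insert e N := by
      rintro Y ⟨Y₀, hY₀, rfl⟩
      rw [supp_reorient]
      exact nbc_insert hk1 hkm M hNBC hNsub Y₀ hY₀
    have H1N' : ∀ Y ∈ (M.reor A).C, ¬ supp Y ⊆ N :=
      fun Y hY hsub => H1N Y hY (hsub.trans (Finset.subset_insert e N))
    by_cases hre : Acyclic (reorientC {e} (MNA M (k-1) N A))
    · -- preimage (N, insert e A)
      refine ⟨(N, insert e A), ⟨hNsub, hNBC, ?_, ?_⟩, ?_⟩
      · intro x hx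
        rcases Finset.mem_insert.mp hx with h | h
        · rw [h, Finset.mem_compl]; exact not_mem_Ek_pred hk1 hkm
        · exact hA' h
      · have hEq : MNA M (k-1) N (insert e A) = reorientC {e} (MNA M (k-1) N A) := by
          show reorientC (insert e A) _ = _
          rw [reorientC_insert heA]
          rfl
        rw [hEq]; exact hre
      · show psi M (k-1) e (N, insert e A) = (N, A)
        simp only [psi]
        rw [if_pos (Finset.mem_insert_self e A), Finset.erase_insert heA]
    · -- preimage (N, A)
      have hAc1 : Acyclic (MNA M (k-1) N A) := by
        rw [MNA_eq]
        intro Z₁ hZ₁ hZ₁2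
        rw [Acyclic] at hre
        push_neg at hre
        obtain ⟨X, hX, hX2⟩ := hre
        obtain ⟨Z₂, hZ₂, rfl⟩ := hX
        rw [MNA_eq] at hZ₂
        simp only [reorient] at hX2
        have h2 := Finset.union_eq_empty.mp hX2
        have hZ₂2 : Z₂.2 ⊆ {e} := Finset.sdiff_eq_empty_iff_subset.mp h2.1
        have hZ₂1 : e ∉ Z₂.1 := by
          intro h
          have h3 : e ∈ Z₂.1 ∩ {e} := Finset.mem_inter.mpr ⟨h, Finset.mem_singleton_self e⟩
          rw [h2.2] at h3
          exact absurd h3 (Finset.notMem_empty e)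
        rw [MNA_eq, hDeq2] at hAc
        by_cases heZ₁ : e ∈ supp Z₁
        · have heZ₁1 : e ∈ Z₁.1 := by
            rcases Finset.mem_union.mp heZ₁ with h | h
            · exact h
            · rw [hZ₁2] at h; exact absurd h (Finset.notMem_empty e)
          by_cases hZ₂e : Z₂.2 = ∅
          · have heZ₂ : e ∉ supp Z₂ := by
              intro h
              rcases Finset.mem_union.mp h with h' | h'
              · exact hZ₂1 h'
              · rw [hZ₂e] at h'; exact absurd h' (Finset.notMem_empty e)
            exact hAc Z₂ (contrC_del_insert _ _ _ e heN hZ₂ heZ₂) hZ₂e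
          · have hZ₂eq : Z₂.2 = {e} := by
              rcases Finset.subset_singleton_iff.mp hZ₂2 with h | h
              · exact absurd h hZ₂e
              · exact h
            obtain ⟨⟨Y₁, ⟨hY₁C, hY₁D⟩, hY₁ne, rfl⟩, -⟩ := hZ₁
            obtain ⟨⟨Y₂, ⟨hY₂C, hY₂D⟩, hY₂ne, rfl⟩, -⟩ := hZ₂
            have heY₁ : e ∈ Y₁.1 := (Finset.mem_sdiff.mp heZ₁1).1
            have heY₂ : e ∈ Y₂.2 := by
              have h3 : e ∈ Y₂.2 \ N := by
                rw [show Y₂.2 \ N = {e} from hZ₂eq]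
                exact Finset.mem_singleton_self e
              exact (Finset.mem_sdiff.mp h3).1
            have hY₁2 : Y₁.2 ⊆ N := by
              rw [← Finset.sdiff_eq_empty_iff_subset]
              exact hZ₁2
            have hY₂2 : Y₂.2 ⊆ insert e N := by
              intro x hx
              by_cases hxN : x ∈ N
              · exact Finset.mem_insert_of_mem hxN
              · have h3 : x ∈ Y₂.2 \ N := Finset.mem_sdiff.mpr ⟨hx, hxN⟩
                rw [show Y₂.2 \ N = {e} from hZ₂eq, Finset.mem_singleton] at h3
                rw [h3]; exact Finset.mem_insert_self e N
            have hne12 : Y₁ ≠ Y₂ := by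
              intro h
              have hd := (M.reor A).disj Y₂ hY₂C
              rw [Finset.disjoint_left] at hd
              exact hd (h ▸ heY₁) heY₂
            have hne12' : Y₁ ≠ (Y₂.2, Y₂.1) := by
              intro h
              apply H1N Y₂ hY₂C
              intro x hx
              rcases Finset.mem_union.mp hx with h' | h'
              · have h3 : Y₁.2 = Y₂.1 := by rw [h]
                rw [← h3] at h'
                exact Finset.mem_insert_of_mem (hY₁2 h')
              · exact hY₂2 h'
            obtain ⟨X', hX'C, hX'1, hX'2⟩ := (M.reor A).elimAx Y₁ hY₁C Y₂ hY₂C hne12 hne12' e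
              (Finset.mem_inter.mpr ⟨heY₁, heY₂⟩)
            have hX'2N : X'.2 ⊆ N := by
              intro x hx
              have h' := hX'2 hx
              rw [Finset.mem_erase, Finset.mem_union] at h'
              rcases h'.2 with h'' | h''
              · exact hY₁2 h''
              · rcases Finset.mem_insert.mp (hY₂2 h'') with h3 | h3
                · exact absurd h3 h'.1
                · exact h3
            have hX'D : Disjoint (supp X') (insert e (Ek m (k-1) \ N)) := by
              rw [Finset.disjoint_insert_right]
              constructor
              · intro h
                rcases Finset.mem_union.mp h with h' | h'
                · exact (Finset.mem_erase.mp (hX'1 h')).1 rfl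
                · exact (Finset.mem_erase.mp (hX'2 h')).1 rfl
              · rw [Finset.disjoint_left]
                intro x hx hxD
                have hxVW : x ∈ supp Y₁ ∪ supp Y₂ := by
                  rcases Finset.mem_union.mp hx with h' | h'
                  · rcases Finset.mem_union.mp (Finset.mem_erase.mp (hX'1 h')).2 with h'' | h''
                    · exact Finset.mem_union_left _ (Finset.mem_union_left _ h'')
                    · exact Finset.mem_union_right _ (Finset.mem_union_left _ h'')
                  · rcases Finset.mem_union.mp (Finset.mem_erase.mp (hX'2 h')).2 with h'' | h''
                    · exact Finset.mem_union_left _ (Finset.mem_union_right _ h'')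
                    · exact Finset.mem_union_right _ (Finset.mem_union_right _ h'')
                rcases Finset.mem_union.mp hxVW with h' | h'
                · exact (Finset.disjoint_left.mp hY₁D) h' hxD
                · exact (Finset.disjoint_left.mp hY₂D) h' hxD
            obtain ⟨Z', hZ', hZ'2⟩ := core (M.reor A) (insert e (Ek m (k-1) \ N)) N
              (fun Y hY _ => H1N' Y hY) X' hX'C hX'D hX'2N
            exact hAc Z' hZ' hZ'2
        · have heZ₁' : e ∉ supp Z₁ := heZ₁
          exact hAc Z₁ (contrC_del_insert _ _ _ e heN hZ₁ heZ₁') hZ₁2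
      refine ⟨(N, A), ⟨hNsub, hNBC, hA', hAc1⟩, ?_⟩
      show psi M (k-1) e (N, A) = (N, A)
      simp only [psi]
      rw [if_neg heA, if_neg hre]
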